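/- Let r > 0 and define the point γ* = (2r+1)√((r+2)r(2r+1))/(r+2)², δ* = 3(1+r)√(3(r+2)r)/(r+2)². Then D(γ*, δ*) = 0, where D is the polynomial D(γ,δ) = δ⁶r² − 2δ⁴[γ²(2+2r−r²) + (2r³+2r⁴−r²)] − δ²[γ⁴(8+8r−r²) + (8r⁴+8r³−r²) − 2γ²(10r+19r²+10r³)] − 4(1+r)(r+γ²)³. -/
import Mathlib


noncomputable def D (r γ δ : ℝ) : ℝ :=
  δ^6*r^2 - 2*δ^4*(γ^2*(2 + 2*r - r^2) + (2*r^3 + 2*r^4 - r^2))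
  - δ^2*(γ^4*(8 + 8*r - r^2) + (8*r^4 + 8*r^3 - r^2)
      - 2*γ^2*(10*r + 19*r^2 + 10*r^3))
  - 4*(1 + r)*(r + γ^2)^3

theorem cusp_on_curve (r : ℝ) (hr : 0 < r) :
    D r ((2*r + 1) * Real.sqrt ((r + 2)*r*(2*r + 1)) / (r + 2)^2)
        (3*(1 + r) * Real.sqrt (3*(r + 2)*r) / (r + 2)^2) = 0 := by
  have h2 : (r + 2) ≠ 0 := by positivity
  have ha : Real.sqrt ((r + 2)*r*(2*r + 1)) ^ 2 = (r + 2)*r*(2*r + 1) :=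
    Real.sq_sqrt (by positivity)
  have hb : Real.sqrt (3*(r + 2)*r) ^ 2 = 3*(r + 2)*r :=
    Real.sq_sqrt (by positivity)
  set γ := (2*r + 1) * Real.sqrt ((r + 2)*r*(2*r + 1)) / (r + 2)^2 with hγ
  set δ := 3*(1 + r) * Real.sqrt (3*(r + 2)*r) / (r + 2)^2 with hδ
  have hγ2 : γ ^ 2 = (2*r + 1)^2 * ((r + 2)*r*(2*r + 1)) / (r + 2)^4 := by
    rw [hγ, div_pow, mul_pow, ha]; ring
  have hδ2 : δ ^ 2 = 9*(1 + r)^2 * (3*(r + 2)*r) / (r + 2)^4 := by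
    rw [hδ, div_pow, mul_pow, hb]; ring
  have hD : D r γ δ = (δ^2)^3*r^2
      - 2*(δ^2)^2*(γ^2*(2 + 2*r - r^2) + (2*r^3 + 2*r^4 - r^2))
      - δ^2*((γ^2)^2*(8 + 8*r - r^2) + (8*r^4 + 8*r^3 - r^2)
          - 2*γ^2*(10*r + 19*r^2 + 10*r^3))
      - 4*(1 + r)*(r + γ^2)^3 := by rw [D]; ring
  rw [hD, hγ2, hδ2]
  field_simp
  ring
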